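/- Let 0<p<1, q=1-p, and let X_1,X_2,... be i.i.d. Bernoulli(p). For m ≥ 2 and T=1, let A_n be the event that exactly one of X_n,...,X_{n+m-1} is 0. Then the conditional probability P(complement(A_2) ∩ ... ∩ complement(A_m) | A_1) = q + (2p^{m-1} - 1)/m. -/

import Mathlib

open MeasureTheory ProbabilityTheory Finset Filter


/-- Number of zeros (tails) among `X n, X (n+1), ..., X (n+m-1)`. -/
def zerosCount {Ω : Type*} (X : ℕ → Ω → Bool) (n m : ℕ) (ω : Ω) : ℕ :=
  ((Finset.range m).filter (fun j => X (n + j) ω = false)).card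

/-- boolean configuration: false exactly on `t`. -/
def bfun (t : Finset ℕ) : ℕ → Bool := fun i => decide (i ∉ t)

lemma bfun_of_mem {t : Finset ℕ} {i : ℕ} (h : i ∈ t) : bfun t i = false := by simp [bfun, h]
lemma bfun_of_not_mem {t : Finset ℕ} {i : ℕ} (h : i ∉ t) : bfun t i = true := by simp [bfun, h]

def cyl {Ω : Type*} (X : ℕ → Ω → Bool) (s : Finset ℕ) (b : ℕ → Bool) : Set Ω :=
  ⋂ i ∈ s, X i ⁻¹' {b i}

lemma mem_cyl {Ω : Type*} {X : ℕ → Ω → Bool} {s : Finset ℕ} {b : ℕ → Bool} {ω : Ω} :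
    ω ∈ cyl X s b ↔ ∀ i ∈ s, X i ω = b i := by simp [cyl]

lemma cyl_congr {Ω : Type*} {X : ℕ → Ω → Bool} {s : Finset ℕ} {b b' : ℕ → Bool}
    (h : ∀ i ∈ s, b i = b' i) : cyl X s b = cyl X s b' := by
  ext ω; simp only [mem_cyl]
  exact ⟨fun H i hi => (H i hi).trans (h i hi), fun H i hi => (H i hi).trans (h i hi).symm⟩

lemma cyl_inter_cyl {Ω : Type*} {X : ℕ → Ω → Bool} {s s' : Finset ℕ} {b : ℕ → Bool} :
    cyl X s b ∩ cyl X s' b = cyl X (s ∪ s') b := by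
  ext ω; simp only [Set.mem_inter_iff, mem_cyl, Finset.mem_union]
  constructor
  · rintro ⟨h1, h2⟩ i (hi | hi); exacts [h1 i hi, h2 i hi]
  · intro h; exact ⟨fun i hi => h i (Or.inl hi), fun i hi => h i (Or.inr hi)⟩

lemma cyl_measurable {Ω : Type*} [MeasurableSpace Ω] {X : ℕ → Ω → Bool}
    (hmeas : ∀ i, Measurable (X i)) (s : Finset ℕ) (b : ℕ → Bool) :
    MeasurableSet (cyl X s b) :=
  MeasurableSet.biInter s.countable_toSet fun i _ => (hmeas i) (measurableSet_singleton _)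

section meas
variable {Ω : Type*} [MeasurableSpace Ω] {μ : Measure Ω} [IsProbabilityMeasure μ]
  {X : ℕ → Ω → Bool} {p q : ℝ}

lemma meas_single (hmeas : ∀ i, Measurable (X i)) (hp : 0 ≤ p) (hp1 : p ≤ 1) (hq : q = 1 - p)
    (hX : ∀ i, μ {ω | X i ω = true} = ENNReal.ofReal p) (i : ℕ) (b : Bool) :
    μ (X i ⁻¹' {b}) = ENNReal.ofReal (if b then p else q) := by
  cases b with
  | true => exact hX i
  | false =>
    have h1 : X i ⁻¹' {false} = {ω | X i ω = true}ᶜ := by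
      ext ω; cases h : X i ω <;> simp [h]
    have hmt : MeasurableSet {ω | X i ω = true} := (hmeas i) (measurableSet_singleton _)
    rw [h1, measure_compl hmt (measure_ne_top μ _), hX i, measure_univ]
    simp only [Bool.false_eq_true, if_false, hq]
    rw [← ENNReal.ofReal_one, ← ENNReal.ofReal_sub _ hp]

lemma meas_cyl (hindep : iIndepFun X μ)
    (hmeas : ∀ i, Measurable (X i)) (hp : 0 ≤ p) (hp1 : p ≤ 1) (hq : q = 1 - p)
    (hX : ∀ i, μ {ω | X i ω = true} = ENNReal.ofReal p)
    {s t : Finset ℕ} (hts : t ⊆ s) :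
    μ (cyl X s (bfun t)) = ENNReal.ofReal (p ^ (s.card - t.card) * q ^ t.card) := by
  have h0 : μ (cyl X s (bfun t)) = ∏ i ∈ s, μ (X i ⁻¹' {bfun t i}) :=
    hindep.measure_inter_preimage_eq_mul (sets := fun i => {bfun t i}) s
      (fun i _ => measurableSet_singleton _)
  have hqnn : 0 ≤ q := by rw [hq]; linarith
  rw [h0]
  have h1 : ∀ i ∈ s, μ (X i ⁻¹' {bfun t i}) =
      if i ∈ t then ENNReal.ofReal q else ENNReal.ofReal p := by
    intro i _
    by_cases hi : i ∈ t
    · rw [meas_single hmeas hp hp1 hq hX i _, bfun_of_mem hi]; simp [hi]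
    · rw [meas_single hmeas hp hp1 hq hX i _, bfun_of_not_mem hi]; simp [hi]
  rw [Finset.prod_congr rfl h1, ← Finset.prod_sdiff hts]
  rw [Finset.prod_congr rfl (fun i hi => if_neg (Finset.mem_sdiff.mp hi).2),
    Finset.prod_congr rfl (g := fun _ => ENNReal.ofReal q) (fun i hi => if_pos hi)]
  rw [Finset.prod_const, Finset.prod_const, Finset.card_sdiff_of_subset hts,
    ENNReal.ofReal_mul (by positivity), ENNReal.ofReal_pow hp, ENNReal.ofReal_pow hqnn]
end meas

section comb
variable {Ω : Type*} {X : ℕ → Ω → Bool} {ω : Ω} {n m : ℕ}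

lemma zerosCount_eq_one {a : ℕ} (ha1 : n ≤ a) (ha2 : a < n + m) (hfa : X a ω = false)
    (hother : ∀ i, n ≤ i → i < n + m → i ≠ a → X i ω = true) :
    zerosCount X n m ω = 1 := by
  unfold zerosCount
  rw [Finset.card_eq_one]
  refine ⟨a - n, ?_⟩
  ext j
  simp only [Finset.mem_filter, Finset.mem_range, Finset.mem_singleton]
  constructor
  · rintro ⟨hj, hfj⟩
    by_contra hne
    have hja : n + j ≠ a := by omega
    have := hother (n + j) (by omega) (by omega) hja
    rw [this] at hfj; exact Bool.noConfusion hfj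
  · rintro rfl
    have hna : n + (a - n) = a := by omega
    rw [hna]
    exact ⟨by omega, hfa⟩

lemma zerosCount_ge_two {a b : ℕ} (hab : a ≠ b) (ha1 : n ≤ a) (ha2 : a < n + m)
    (hb1 : n ≤ b) (hb2 : b < n + m) (hfa : X a ω = false) (hfb : X b ω = false) :
    2 ≤ zerosCount X n m ω := by
  unfold zerosCount
  have hsub : {a - n, b - n} ⊆ (Finset.range m).filter (fun j => X (n + j) ω = false) := by
    intro j hj
    simp only [Finset.mem_insert, Finset.mem_singleton] at hj
    rcases hj with rfl | rfl
    · have : n + (a - n) = a := by omega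
      simp only [Finset.mem_filter, Finset.mem_range, this]
      exact ⟨by omega, hfa⟩
    · have : n + (b - n) = b := by omega
      simp only [Finset.mem_filter, Finset.mem_range, this]
      exact ⟨by omega, hfb⟩
  have hcard : ({a - n, b - n} : Finset ℕ).card = 2 := Finset.card_pair (by omega)
  calc 2 = ({a - n, b - n} : Finset ℕ).card := hcard.symm
    _ ≤ _ := Finset.card_le_card hsub

lemma zerosCount_eq_zero (hall : ∀ i, n ≤ i → i < n + m → X i ω = true) :
    zerosCount X n m ω = 0 := by
  unfold zerosCount
  rw [Finset.card_eq_zero, Finset.filter_eq_empty_iff]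
  intro j hj
  simp only [Finset.mem_range] at hj
  rw [hall (n + j) (by omega) (by omega)]
  simp

lemma exists_of_zerosCount_eq_one (h : zerosCount X n m ω = 1) :
    ∃ a, n ≤ a ∧ a < n + m ∧ X a ω = false ∧
      ∀ i, n ≤ i → i < n + m → i ≠ a → X i ω = true := by
  unfold zerosCount at h
  rw [Finset.card_eq_one] at h
  obtain ⟨j0, hj0⟩ := h
  have hj0mem : j0 ∈ (Finset.range m).filter (fun j => X (n + j) ω = false) := by
    rw [hj0]; exact Finset.mem_singleton_self _
  simp only [Finset.mem_filter, Finset.mem_range] at hj0mem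
  refine ⟨n + j0, by omega, by omega, hj0mem.2, ?_⟩
  intro i hi1 hi2 hia
  cases hb : X i ω with
  | true => rfl
  | false =>
    exfalso
    have : i - n ∈ (Finset.range m).filter (fun j => X (n + j) ω = false) := by
      have : n + (i - n) = i := by omega
      simp only [Finset.mem_filter, Finset.mem_range, this]
      exact ⟨by omega, hb⟩
    rw [hj0, Finset.mem_singleton] at this
    omega
end comb


/-- The event that the window of length `m` starting at `n` contains exactly `T` zeros. -/
def contamRun {Ω : Type*} (X : ℕ → Ω → Bool) (T n m : ℕ) : Set Ω :=
  {ω | zerosCount X n m ω = T}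

lemma key_decomp {Ω : Type*} {X : ℕ → Ω → Bool} {m : ℕ} (hm : 2 ≤ m) :
    contamRun X 1 1 m ∩ ⋂ n ∈ Finset.Icc 2 m, (contamRun X 1 n m)ᶜ =
      cyl X (Icc 1 (2*m-1)) (bfun {1}) ∪
      ((⋃ k ∈ Finset.Icc 2 (m-1),
          (cyl X (Icc 1 (m+1)) (bfun {k, m+1}) ∩ (cyl X (Icc (m+2) (m+k)) (bfun ∅))ᶜ)) ∪
        cyl X (Icc 1 (m+1)) (bfun {m, m+1})) := by
  have hbval : ∀ (t : Finset ℕ) i, bfun t i = if i ∈ t then false else true := by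
    intro t i; by_cases h : i ∈ t <;> simp [bfun, h]
  ext ω
  simp only [Set.mem_inter_iff, Set.mem_iInter, Set.mem_compl_iff, Set.mem_union,
    Set.mem_iUnion, contamRun, Set.mem_setOf_eq, Finset.mem_Icc, mem_cyl, hbval,
    Finset.mem_singleton, Finset.mem_insert, exists_prop]
  constructor
  · rintro ⟨h1, hB⟩
    obtain ⟨a, ha1, ha2, hfa, hother⟩ := exists_of_zerosCount_eq_one h1
    by_cases hA : a = 1
    · -- left branch
      subst hA
      left
      have claim : ∀ r, r ≤ m - 1 → 1 ≤ r → X (m + r) ω = true := by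
        intro r
        induction r using Nat.strong_induction_on with
        | _ r ih =>
          intro hr1 hr2
          cases hc : X (m + r) ω with
          | true => rfl
          | false =>
            exfalso
            refine hB (r+1) ⟨by omega, by omega⟩ ?_
            refine zerosCount_eq_one (a := m + r) (by omega) (by omega) hc ?_
            intro i hi1 hi2 hia
            by_cases him : i ≤ m
            · exact hother i (by omega) (by omega) (by omega)
            · exact ih (i - m) (by omega) (by omega) (by omega) ▸ by
                have : m + (i - m) = i := by omega
                rw [this]
        -- end
      intro i hi
      by_cases hi1 : i = 1
      · subst hi1; simpa using hfa
      · rw [if_neg hi1]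
        by_cases him : i ≤ m
        · exact hother i (by omega) (by omega) (by omega)
        · have : m + (i - m) = i := by omega
          rw [← this]; exact claim (i - m) (by omega) (by omega)
    · -- a ≥ 2
      right
      have ha2' : 2 ≤ a := by omega
      have hm1 : X (m + 1) ω = false := by
        cases hc : X (m + 1) ω with
        | false => rfl
        | true =>
          exfalso
          refine hB 2 ⟨le_refl 2, hm⟩ ?_
          refine zerosCount_eq_one (a := a) (by omega) (by omega) hfa ?_
          intro i hi1 hi2 hia
          by_cases him : i ≤ m
          · exact hother i (by omega) (by omega) hia
          · have : i = m + 1 := by omega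
            rw [this]; exact hc
      have hDmem : ∀ k, 2 ≤ k → a = k → ∀ i, 1 ≤ i ∧ i ≤ m + 1 →
          X i ω = if i = k ∨ i = m + 1 then false else true := by
        rintro k hk rfl i ⟨hi1, hi2⟩
        by_cases hik : i = a ∨ i = m + 1
        · rw [if_pos hik]
          rcases hik with rfl | rfl
          exacts [hfa, hm1]
        · push_neg at hik
          rw [if_neg (by tauto)]
          exact hother i hi1 (by omega) hik.1
      by_cases ham : a = m
      · right; exact fun i hi => hDmem m hm ham i hi
      · left
        refine ⟨a, ⟨ha2', by omega⟩, hDmem a ha2' rfl, ?_⟩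
        -- not all true on [m+2, m+a]
        intro hall
        refine hB (a+1) ⟨by omega, by omega⟩ ?_
        refine zerosCount_eq_one (a := m + 1) (by omega) (by omega) hm1 ?_
        intro i hi1 hi2 hia
        by_cases him : i ≤ m
        · exact hother i (by omega) (by omega) (by omega)
        · have := hall i ⟨by omega, by omega⟩
          rw [this]
          simp
  · rintro (hCa | hmid | hDm)
    · -- Ca case
      constructor
      · refine zerosCount_eq_one (a := 1) le_rfl (by omega) (by simpa using hCa 1 ⟨le_rfl, by omega⟩) ?_
        intro i hi1 hi2 hia
        have := hCa i ⟨by omega, by omega⟩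
        rwa [if_neg hia] at this
      · intro n hn
        have : zerosCount X n m ω = 0 := by
          refine zerosCount_eq_zero ?_
          intro i hi1 hi2
          have := hCa i ⟨by omega, by omega⟩
          rwa [if_neg (by omega)] at this
        omega
    · obtain ⟨k, ⟨hk1, hk2⟩, hD, hG⟩ := hmid
      push_neg at hG
      obtain ⟨i0, hi0mem, hi0⟩ := hG
      simp only [Finset.notMem_empty, if_false] at hi0
      have hi0f : X i0 ω = false := by
        cases h : X i0 ω with
        | false => rfl
        | true => exact absurd h hi0
      have hkf : X k ω = false := by
        have := hD k ⟨by omega, by omega⟩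
        rwa [if_pos (Or.inl rfl)] at this
      have hm1f : X (m+1) ω = false := by
        have := hD (m+1) ⟨by omega, le_rfl⟩
        rwa [if_pos (Or.inr rfl)] at this
      constructor
      · refine zerosCount_eq_one (a := k) (by omega) (by omega) hkf ?_
        intro i hi1 hi2 hia
        have := hD i ⟨by omega, by omega⟩
        rwa [if_neg (by omega)] at this
      · intro n hn
        have h2 : 2 ≤ zerosCount X n m ω := by
          by_cases hnk : n ≤ k
          · exact zerosCount_ge_two (a := k) (b := m+1) (by omega) (by omega) (by omega)
              (by omega) (by omega) hkf hm1f
          · exact zerosCount_ge_two (a := m+1) (b := i0) (by omega) (by omega) (by omega)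
              (by omega) (by omega) hm1f hi0f
        omega
    · have hkf : X m ω = false := by
        have := hDm m ⟨by omega, by omega⟩
        rwa [if_pos (Or.inl rfl)] at this
      have hm1f : X (m+1) ω = false := by
        have := hDm (m+1) ⟨by omega, le_rfl⟩
        rwa [if_pos (Or.inr rfl)] at this
      constructor
      · refine zerosCount_eq_one (a := m) (by omega) (by omega) hkf ?_
        intro i hi1 hi2 hia
        have := hDm i ⟨by omega, by omega⟩
        rwa [if_neg (by omega)] at this
      · intro n hn
        have h2 : 2 ≤ zerosCount X n m ω :=
          zerosCount_ge_two (a := m) (b := m+1) (by omega) (by omega) (by omega)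
            (by omega) (by omega) hkf hm1f
        omega


section main
variable {Ω : Type*} [MeasurableSpace Ω] {μ : Measure Ω} [IsProbabilityMeasure μ]
  {X : ℕ → Ω → Bool} {p q : ℝ}

lemma meas_A1 (hindep : iIndepFun X μ)
    (hmeas : ∀ i, Measurable (X i)) (hp : 0 ≤ p) (hp1 : p ≤ 1) (hq : q = 1 - p)
    (hX : ∀ i, μ {ω | X i ω = true} = ENNReal.ofReal p)
    {m : ℕ} (hm : 1 ≤ m) :
    μ (contamRun X 1 1 m) = ENNReal.ofReal (m * (p ^ (m - 1) * q)) := by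
  have hset : contamRun X 1 1 m = ⋃ k ∈ Finset.Icc 1 m, cyl X (Icc 1 m) (bfun {k}) := by
    ext ω
    simp only [contamRun, Set.mem_setOf_eq, Set.mem_iUnion, mem_cyl, exists_prop,
      Finset.mem_Icc]
    constructor
    · intro h1
      obtain ⟨a, ha1, ha2, hfa, hother⟩ := exists_of_zerosCount_eq_one h1
      refine ⟨a, ⟨ha1, by omega⟩, ?_⟩
      intro i hi
      by_cases hia : i = a
      · subst hia; rw [bfun_of_mem (Finset.mem_singleton_self i)]; exact hfa
      · rw [bfun_of_not_mem (by simpa using hia)]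
        exact hother i (by omega) (by omega) hia
    · rintro ⟨k, ⟨hk1, hk2⟩, hk⟩
      refine zerosCount_eq_one (a := k) (by omega) (by omega) ?_ ?_
      · have := hk k ⟨hk1, hk2⟩
        rwa [bfun_of_mem (Finset.mem_singleton_self k)] at this
      · intro i hi1 hi2 hia
        have := hk i ⟨hi1, by omega⟩
        rwa [bfun_of_not_mem (by simpa using hia)] at this
  rw [hset, measure_biUnion_finset ?_ (fun k _ => cyl_measurable hmeas _ _)]
  · have hval : ∀ k ∈ Finset.Icc 1 m, μ (cyl X (Icc 1 m) (bfun {k})) =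
        ENNReal.ofReal (p ^ (m - 1) * q) := by
      intro k hk
      rw [Finset.mem_Icc] at hk
      have hts : ({k} : Finset ℕ) ⊆ Icc 1 m := by
        simp only [Finset.singleton_subset_iff, Finset.mem_Icc]; omega
      rw [meas_cyl hindep hmeas hp hp1 hq hX hts]
      simp [Nat.card_Icc]
    rw [Finset.sum_congr rfl hval, Finset.sum_const, Nat.card_Icc]
    simp only [Nat.add_sub_cancel, nsmul_eq_mul]
    rw [← ENNReal.ofReal_natCast, ← ENNReal.ofReal_mul (by positivity)]
  · intro i hi j hj hij
    simp only [Finset.coe_Icc, Set.mem_Icc] at hi hj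
    rw [Function.onFun, Set.disjoint_left]
    intro ω hωi hωj
    rw [mem_cyl] at hωi hωj
    have h1 := hωi i (Finset.mem_Icc.mpr ⟨hi.1, hi.2⟩)
    have h2 := hωj i (Finset.mem_Icc.mpr ⟨hi.1, hi.2⟩)
    rw [bfun_of_mem (Finset.mem_singleton_self i)] at h1
    rw [bfun_of_not_mem (by simpa using hij)] at h2
    rw [h1] at h2
    exact Bool.noConfusion h2
end main

theorem stmt1 {Ω : Type*} [MeasurableSpace Ω] (μ : Measure Ω) [IsProbabilityMeasure μ]
    (X : ℕ → Ω → Bool) (hmeas : ∀ i, Measurable (X i))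
    (hindep : iIndepFun X μ)
    (p q : ℝ) (hp : 0 < p) (hp1 : p < 1) (hq : q = 1 - p)
    (hX : ∀ i, μ {ω | X i ω = true} = ENNReal.ofReal p)
    (m : ℕ) (hm : 2 ≤ m) :
    (μ (contamRun X 1 1 m ∩ ⋂ n ∈ Finset.Icc 2 m, (contamRun X 1 n m)ᶜ)).toReal /
        (μ (contamRun X 1 1 m)).toReal =
      q + (2 * p ^ (m - 1) - 1) / m := by
  have hpnn : 0 ≤ p := hp.le
  have hple : p ≤ 1 := hp1.le
  have hqpos : 0 < q := by rw [hq]; linarith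
  have hqnn : 0 ≤ q := hqpos.le
  set Ca := cyl X (Icc 1 (2*m-1)) (bfun {1}) with hCadef
  set D : ℕ → Set Ω := fun k => cyl X (Icc 1 (m+1)) (bfun {k, m+1}) with hDdef
  set G : ℕ → Set Ω := fun k => cyl X (Icc (m+2) (m+k)) (bfun (∅ : Finset ℕ)) with hGdef
  have hmD : ∀ k, MeasurableSet (D k) := fun k => cyl_measurable hmeas _ _
  have hmG : ∀ k, MeasurableSet (G k) := fun k => cyl_measurable hmeas _ _
  have hmCa : MeasurableSet Ca := cyl_measurable hmeas _ _
  -- X k is false on D k, true elsewhere on [1, m+1]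
  have hDfalse : ∀ k ω, ω ∈ D k → 1 ≤ k → k ≤ m → X k ω = false := by
    intro k ω hω hk1 hk2
    rw [hDdef, mem_cyl] at hω
    have := hω k (Finset.mem_Icc.mpr ⟨hk1, by omega⟩)
    rwa [bfun_of_mem (by simp)] at this
  have hDtrue : ∀ k ω, ω ∈ D k → ∀ i, 1 ≤ i → i ≤ m + 1 → i ≠ k → i ≠ m + 1 → X i ω = true := by
    intro k ω hω i hi1 hi2 hik him
    rw [hDdef, mem_cyl] at hω
    have := hω i (Finset.mem_Icc.mpr ⟨hi1, hi2⟩)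
    rwa [bfun_of_not_mem (by simp [hik, him])] at this
  have hCatrue : ∀ ω, ω ∈ Ca → ∀ i, 2 ≤ i → i ≤ 2*m-1 → X i ω = true := by
    intro ω hω i hi1 hi2
    rw [hCadef, mem_cyl] at hω
    have := hω i (Finset.mem_Icc.mpr ⟨by omega, hi2⟩)
    rwa [bfun_of_not_mem (by simp; omega)] at this
  -- disjointness
  have hdisj2 : Disjoint (⋃ k ∈ Finset.Icc 2 (m-1), (D k ∩ (G k)ᶜ)) (D m) := by
    rw [Set.disjoint_left]
    intro ω hω hωm
    simp only [Set.mem_iUnion, exists_prop, Finset.mem_Icc] at hω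
    obtain ⟨k, ⟨hk1, hk2⟩, hωk, -⟩ := hω
    have h1 := hDfalse k ω hωk (by omega) (by omega)
    have h2 := hDtrue m ω hωm k (by omega) (by omega) (by omega) (by omega)
    rw [h1] at h2; exact Bool.noConfusion h2
  have hdisj1 : Disjoint Ca ((⋃ k ∈ Finset.Icc 2 (m-1), (D k ∩ (G k)ᶜ)) ∪ D m) := by
    rw [Set.disjoint_left]
    intro ω hω hω'
    rcases hω' with hω' | hω'
    · simp only [Set.mem_iUnion, exists_prop, Finset.mem_Icc] at hω'
      obtain ⟨k, ⟨hk1, hk2⟩, hωk, -⟩ := hω'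
      have h1 := hDfalse k ω hωk (by omega) (by omega)
      have h2 := hCatrue ω hω k (by omega) (by omega)
      rw [h1] at h2; exact Bool.noConfusion h2
    · have h1 := hDfalse m ω hω' (by omega) (by omega)
      have h2 := hCatrue ω hω m (by omega) (by omega)
      rw [h1] at h2; exact Bool.noConfusion h2
  have hpair : (↑(Finset.Icc 2 (m-1)) : Set ℕ).PairwiseDisjoint
      (fun k => D k ∩ (G k)ᶜ) := by
    intro i hi j hj hij
    simp only [Finset.coe_Icc, Set.mem_Icc] at hi hj
    rw [Function.onFun, Set.disjoint_left]
    intro ω hωi hωj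
    have h1 := hDfalse i ω hωi.1 (by omega) (by omega)
    have h2 := hDtrue j ω hωj.1 i (by omega) (by omega) hij (by omega)
    rw [h1] at h2; exact Bool.noConfusion h2
  -- measures of the pieces
  have hμCa : μ Ca = ENNReal.ofReal (p ^ (2*m-2) * q) := by
    have hts : ({1} : Finset ℕ) ⊆ Icc 1 (2*m-1) := by
      simp only [Finset.singleton_subset_iff, Finset.mem_Icc]; omega
    rw [hCadef, meas_cyl hindep hmeas hpnn hple hq hX hts, Nat.card_Icc,
      Finset.card_singleton]
    have h1 : 2*m-1+1-1-1 = 2*m-2 := by omega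
    rw [h1, pow_one]
  have hμD : ∀ k, 2 ≤ k → k ≤ m → μ (D k) = ENNReal.ofReal (p ^ (m-1) * q^2) := by
    intro k hk1 hk2
    have hts : ({k, m+1} : Finset ℕ) ⊆ Icc 1 (m+1) := by
      intro i hi
      simp only [Finset.mem_insert, Finset.mem_singleton] at hi
      rw [Finset.mem_Icc]; omega
    rw [hDdef, meas_cyl hindep hmeas hpnn hple hq hX hts, Nat.card_Icc,
      Finset.card_pair (by omega)]
    have h1 : m+1+1-1-2 = m-1 := by omega
    rw [h1]
  have hμDG : ∀ k, 2 ≤ k → k ≤ m-1 →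
      μ (D k ∩ G k) = ENNReal.ofReal (p ^ (m+k-2) * q^2) := by
    intro k hk1 hk2
    have hGeq : G k = cyl X (Icc (m+2) (m+k)) (bfun {k, m+1}) := by
      rw [hGdef]
      refine cyl_congr ?_
      intro i hi
      rw [Finset.mem_Icc] at hi
      rw [bfun_of_not_mem (by simp), bfun_of_not_mem (by simp; omega)]
    rw [hDdef, hGeq, cyl_inter_cyl]
    have hunion : Icc 1 (m+1) ∪ Icc (m+2) (m+k) = Icc 1 (m+k) := by
      ext i
      simp only [Finset.mem_union, Finset.mem_Icc]
      omega
    have hts : ({k, m+1} : Finset ℕ) ⊆ Icc 1 (m+k) := by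
      intro i hi
      simp only [Finset.mem_insert, Finset.mem_singleton] at hi
      rw [Finset.mem_Icc]; omega
    rw [hunion, meas_cyl hindep hmeas hpnn hple hq hX hts, Nat.card_Icc,
      Finset.card_pair (by omega)]
    have h1 : m+k+1-1-2 = m+k-2 := by omega
    rw [h1]
  have hμDGc : ∀ k, 2 ≤ k → k ≤ m-1 →
      μ (D k ∩ (G k)ᶜ) = ENNReal.ofReal (p^(m-1)*q^2 - p^(m+k-2)*q^2) := by
    intro k hk1 hk2
    have hd := measure_inter_add_diff (μ := μ) (D k) (hmG k)
    rw [Set.diff_eq, hμDG k hk1 hk2, hμD k hk1 (by omega)] at hd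
    have hle : p^(m+k-2)*q^2 ≤ p^(m-1)*q^2 := by
      have h1 : p^(m+k-2) ≤ p^(m-1) :=
        pow_le_pow_of_le_one hpnn hple (by omega)
      nlinarith [sq_nonneg q]
    have hsplit : ENNReal.ofReal (p^(m-1)*q^2) =
        ENNReal.ofReal (p^(m+k-2)*q^2) + ENNReal.ofReal (p^(m-1)*q^2 - p^(m+k-2)*q^2) := by
      rw [← ENNReal.ofReal_add (by positivity) (by linarith)]
      ring_nf
    rw [hsplit] at hd
    exact (ENNReal.add_right_inj ENNReal.ofReal_ne_top).mp hd
  -- total measure of the event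
  have hnn : ∀ k ∈ Finset.Icc 2 (m-1), 0 ≤ p^(m-1)*q^2 - p^(m+k-2)*q^2 := by
    intro k hk
    rw [Finset.mem_Icc] at hk
    have h1 : p^(m+k-2) ≤ p^(m-1) :=
      pow_le_pow_of_le_one hpnn hple (by omega)
    nlinarith [sq_nonneg q]
  have hμLHS : μ (contamRun X 1 1 m ∩ ⋂ n ∈ Finset.Icc 2 m, (contamRun X 1 n m)ᶜ) =
      ENNReal.ofReal (p^(2*m-2)*q +
        ((∑ k ∈ Finset.Icc 2 (m-1), (p^(m-1)*q^2 - p^(m+k-2)*q^2)) + p^(m-1)*q^2)) := by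
    rw [key_decomp hm]
    rw [measure_union hdisj1 (((Finset.Icc 2 (m-1)).measurableSet_biUnion
        (fun k _ => (hmD k).inter (hmG k).compl)).union (hmD m))]
    rw [measure_union hdisj2 (hmD m)]
    rw [measure_biUnion_finset hpair (fun k _ => (hmD k).inter (hmG k).compl)]
    rw [hμCa, hμD m hm le_rfl]
    have hsum_eq : (∑ k ∈ Finset.Icc 2 (m-1), μ (D k ∩ (G k)ᶜ))
        = ∑ k ∈ Finset.Icc 2 (m-1),
            ENNReal.ofReal (p^(m-1)*q^2 - p^(m+k-2)*q^2) :=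
      Finset.sum_congr rfl (fun k hk =>
        hμDGc k (Finset.mem_Icc.mp hk).1 (Finset.mem_Icc.mp hk).2)
    rw [hsum_eq, ← ENNReal.ofReal_sum_of_nonneg hnn]
    rw [← ENNReal.ofReal_add (Finset.sum_nonneg hnn) (by positivity)]
    rw [← ENNReal.ofReal_add
      (mul_nonneg (pow_nonneg hpnn _) hqnn)
      (add_nonneg (Finset.sum_nonneg hnn) (by positivity))]
  have hA1 : μ (contamRun X 1 1 m) = ENNReal.ofReal (m * (p ^ (m-1) * q)) :=
    meas_A1 hindep hmeas hpnn hple hq hX (by omega)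
  rw [hμLHS, hA1,
    ENNReal.toReal_ofReal
      (mul_nonneg (Nat.cast_nonneg m) (mul_nonneg (pow_nonneg hpnn _) hqnn)),
    ENNReal.toReal_ofReal
      (add_nonneg (mul_nonneg (pow_nonneg hpnn _) hqnn)
        (add_nonneg (Finset.sum_nonneg hnn) (by positivity)))]
  -- now pure real arithmetic
  have hgeom : ∑ k ∈ Finset.Icc 2 (m-1), p^k = (p^m - p^2)/(p-1) := by
    have h1 : Finset.Icc 2 (m-1) = Finset.Ico 2 m := by
      rw [← Finset.Ico_add_one_right_eq_Icc]
      congr 1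
      omega
    rw [h1]
    exact geom_sum_Ico (ne_of_lt hp1) hm
  have hS2 : ∑ k ∈ Finset.Icc 2 (m-1), p^(m+k-2)*q^2
      = q^2 * p^(m-2) * ((p^m - p^2)/(p-1)) := by
    rw [show (∑ k ∈ Finset.Icc 2 (m-1), p^(m+k-2)*q^2)
        = ∑ k ∈ Finset.Icc 2 (m-1), q^2 * p^(m-2) * p^k from
      Finset.sum_congr rfl (fun k hk => by
        rw [Finset.mem_Icc] at hk
        have h2 : m+k-2 = (m-2)+k := by omega
        rw [h2, pow_add]; ring)]
    rw [← Finset.mul_sum, hgeom]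
  have hScard : ((Finset.Icc 2 (m-1)).card : ℝ) = (m : ℝ) - 2 := by
    rw [Nat.card_Icc]
    have h1 : m-1+1-2 = m-2 := by omega
    rw [h1, Nat.cast_sub hm]
    norm_num
  have hSsum : ∑ k ∈ Finset.Icc 2 (m-1), (p^(m-1)*q^2 - p^(m+k-2)*q^2)
      = ((m:ℝ) - 2) * (p^(m-1)*q^2) - q^2 * p^(m-2) * ((p^m - p^2)/(p-1)) := by
    rw [Finset.sum_sub_distrib, hS2, Finset.sum_const, nsmul_eq_mul, hScard]
  rw [hSsum]
  have e1 : p^(m-1) = p^(m-2) * p := by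
    rw [← pow_succ]; congr 1; omega
  have e2 : p^m = p^(m-2) * p^2 := by
    rw [← pow_add]; congr 1; omega
  have e3 : p^(2*m-2) = p^(m-2) * p^(m-2) * p^2 := by
    rw [← pow_add, ← pow_add]; congr 1; omega
  rw [e1, e2, e3]
  have hmR : (0:ℝ) < (m:ℝ) := by positivity
  have hp1ne : p - 1 ≠ 0 := by linarith
  have hane : p^(m-2) ≠ 0 := by positivity
  have hqsub : q = 1 - p := hq
  subst hqsub
  field_simp
  ring
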